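/- Fix ψ > 0 and a, b, c > 0 with a + b + c = 1. On the domain 𝒟 = {(x,y) ∈ ℝ²_{>0} : x < 1 + b, x − b < y < min{x, 1}}, define h(x,y) = (2−y)log(2−y) − (1−y)log(1−y) + (1+y)log(1+y) − y·log y + (c+x−y)log(c+x−y) − c·log c − (x−y)log(x−y) + (a+b+y−x)log(a+b+y−x) − a·log a − (b+y−x)log(b+y−x), and f(x) = (ψ+x)log(ψ+x) − ψ·log ψ − x·log x. Then both eigenvalues of the Hessian of f + h at every point of 𝒟 are at most −ψ/(2(ψ+2)). -/

import Mathlib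

open Real

/-- The entropy-type function `h(x,y)` on the domain `𝒟`. -/
noncomputable def hFn (a b c x y : ℝ) : ℝ :=
  (2 - y) * Real.log (2 - y) - (1 - y) * Real.log (1 - y) + (1 + y) * Real.log (1 + y) -
    y * Real.log y + (c + x - y) * Real.log (c + x - y) - c * Real.log c -
    (x - y) * Real.log (x - y) + (a + b + y - x) * Real.log (a + b + y - x) -
    a * Real.log a - (b + y - x) * Real.log (b + y - x)

/-- The function `f(x) = (ψ+x)log(ψ+x) − ψ log ψ − x log x`. -/
noncomputable def fFn (ψ x : ℝ) : ℝ :=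
  (ψ + x) * Real.log (ψ + x) - ψ * Real.log ψ - x * Real.log x

/-- `g = f + h`. -/
noncomputable def gFn (a b c ψ x y : ℝ) : ℝ := fFn ψ x + hFn a b c x y

/-- Membership in the domain `𝒟 = {(x,y) : 0 < x, 0 < y, x < 1+b, x−b < y < min(x,1)}`. -/
def memD (b x y : ℝ) : Prop :=
  0 < x ∧ 0 < y ∧ x < 1 + b ∧ x - b < y ∧ y < x ∧ y < 1

/-- The Hessian matrix of `g = f + h` at `(x, y)`, with entries given by iterated `deriv`s. -/
noncomputable def hessG (a b c ψ x y : ℝ) : Matrix (Fin 2) (Fin 2) ℝ :=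
  !![deriv (fun t => deriv (fun s => gFn a b c ψ s y) t) x,
     deriv (fun t => deriv (fun s => gFn a b c ψ s t) x) y;
     deriv (fun t => deriv (fun s => gFn a b c ψ t s) y) x,
     deriv (fun t => deriv (fun s => gFn a b c ψ x s) t) y]

private lemma mulLogDeriv {u : ℝ → ℝ} {u' t : ℝ} (hu : HasDerivAt u u' t) (h : u t ≠ 0) :
    HasDerivAt (fun s => u s * Real.log (u s)) (u' * (Real.log (u t) + 1)) t := by
  exact HasDerivAt.congr_deriv ((Real.hasDerivAt_mul_log h).comp t hu) (mul_comm _ _)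

private lemma logDeriv'' {u : ℝ → ℝ} {u' t : ℝ} (hu : HasDerivAt u u' t) (h : u t ≠ 0) :
    HasDerivAt (fun s => Real.log (u s)) (u' * (u t)⁻¹) t := by
  exact HasDerivAt.congr_deriv ((Real.hasDerivAt_log h).comp t hu) (mul_comm _ _)

private lemma hasDerivAt_gFn_x (a b c ψ y t : ℝ)
    (h1 : 0 < ψ + t) (h2 : 0 < t) (h3 : 0 < c + t - y) (h4 : 0 < t - y)
    (h5 : 0 < a + b + y - t) (h6 : 0 < b + y - t) :
    HasDerivAt (fun s => gFn a b c ψ s y)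
      (Real.log (ψ + t) - Real.log t + Real.log (c + t - y) - Real.log (t - y)
        - Real.log (a + b + y - t) + Real.log (b + y - t)) t := by
  have T1 := mulLogDeriv ((hasDerivAt_id t).const_add ψ) h1.ne'
  have T2 := Real.hasDerivAt_mul_log h2.ne'
  have T3 := mulLogDeriv (((hasDerivAt_id t).const_add c).sub_const y) h3.ne'
  have T4 := mulLogDeriv ((hasDerivAt_id t).sub_const y) h4.ne'
  have T5 := mulLogDeriv ((hasDerivAt_id t).const_sub (a + b + y)) h5.ne'
  have T6 := mulLogDeriv ((hasDerivAt_id t).const_sub (b + y)) h6.ne'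
  have H := ((T1.sub_const (ψ * Real.log ψ)).sub T2).add
    ((((((((((hasDerivAt_const t ((2 - y) * Real.log (2 - y))).sub
      (hasDerivAt_const t ((1 - y) * Real.log (1 - y)))).add
      (hasDerivAt_const t ((1 + y) * Real.log (1 + y)))).sub
      (hasDerivAt_const t (y * Real.log y))).add T3).sub
      (hasDerivAt_const t (c * Real.log c))).sub T4).add T5).sub
      (hasDerivAt_const t (a * Real.log a))).sub T6)
  simp only [gFn, fFn, hFn]
  simp only [id_eq] at H
  refine H.congr_deriv ?_
  ring_nf

private lemma hasDerivAt_gFn_y (a b c ψ x t : ℝ)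
    (h1 : 0 < 2 - t) (h2 : 0 < 1 - t) (h3 : 0 < 1 + t) (h4 : 0 < t)
    (h5 : 0 < c + x - t) (h6 : 0 < x - t) (h7 : 0 < a + b + t - x) (h8 : 0 < b + t - x) :
    HasDerivAt (fun s => gFn a b c ψ x s)
      (-Real.log (2 - t) + Real.log (1 - t) + Real.log (1 + t) - Real.log t
        - Real.log (c + x - t) + Real.log (x - t) + Real.log (a + b + t - x)
        - Real.log (b + t - x)) t := by
  have S1 := mulLogDeriv ((hasDerivAt_id t).const_sub 2) h1.ne'
  have S2 := mulLogDeriv ((hasDerivAt_id t).const_sub 1) h2.ne'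
  have S3 := mulLogDeriv ((hasDerivAt_id t).const_add 1) h3.ne'
  have S4 := Real.hasDerivAt_mul_log h4.ne'
  have S5 := mulLogDeriv ((hasDerivAt_id t).const_sub (c + x)) h5.ne'
  have S6 := mulLogDeriv ((hasDerivAt_id t).const_sub x) h6.ne'
  have S7 := mulLogDeriv (((hasDerivAt_id t).const_add (a + b)).sub_const x) h7.ne'
  have S8 := mulLogDeriv (((hasDerivAt_id t).const_add b).sub_const x) h8.ne'
  have H := (hasDerivAt_const t (fFn ψ x)).add
    (((((((((S1.sub S2).add S3).sub S4).add S5).sub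
      (hasDerivAt_const t (c * Real.log c))).sub S6).add S7).sub
      (hasDerivAt_const t (a * Real.log a))).sub S8)
  simp only [gFn, hFn]
  simp only [id_eq] at H
  refine H.congr_deriv ?_
  ring_nf

set_option maxHeartbeats 1000000 in
private lemma E00 (a b c ψ x y : ℝ) (hψ : 0 < ψ) (hx : 0 < x) (hy : 0 < y)
    (hyx : y < x) (hxby' : x < b + y) (ha : 0 < a) (hb : 0 < b) (hc : 0 < c)
    (hψx : 0 < ψ + x) (hxy : 0 < x - y) (hcxy : 0 < c + x - y)
    (hbyx : 0 < b + y - x) (habyx : 0 < a + b + y - x) :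
    deriv (fun t => deriv (fun s => gFn a b c ψ s y) t) x =
      (ψ + x)⁻¹ - x⁻¹ + (c + x - y)⁻¹ - (x - y)⁻¹ + (a + b + y - x)⁻¹ - (b + y - x)⁻¹ := by
  have hev : (fun t => deriv (fun s => gFn a b c ψ s y) t) =ᶠ[nhds x]
      (fun t => Real.log (ψ + t) - Real.log t + Real.log (c + t - y) - Real.log (t - y)
        - Real.log (a + b + y - t) + Real.log (b + y - t)) := by
    filter_upwards [Ioo_mem_nhds hyx hxby'] with t ht
    exact (hasDerivAt_gFn_x a b c ψ y t (by linarith [ht.1]) (by linarith [ht.1])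
      (by linarith [ht.1]) (by linarith [ht.1]) (by linarith [ht.2])
      (by linarith [ht.2])).deriv
  rw [hev.deriv_eq]
  have L1 := logDeriv'' ((hasDerivAt_id x).const_add ψ) hψx.ne'
  have L2 := Real.hasDerivAt_log hx.ne'
  have L3 := logDeriv'' (((hasDerivAt_id x).const_add c).sub_const y) hcxy.ne'
  have L4 := logDeriv'' ((hasDerivAt_id x).sub_const y) hxy.ne'
  have L5 := logDeriv'' ((hasDerivAt_id x).const_sub (a + b + y)) habyx.ne'
  have L6 := logDeriv'' ((hasDerivAt_id x).const_sub (b + y)) hbyx.ne'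
  have H := ((((L1.sub L2).add L3).sub L4).sub L5).add L6
  simp only [id_eq] at H
  have H2 : HasDerivAt (fun t => Real.log (ψ + t) - Real.log t + Real.log (c + t - y)
      - Real.log (t - y) - Real.log (a + b + y - t) + Real.log (b + y - t))
      ((ψ + x)⁻¹ - x⁻¹ + (c + x - y)⁻¹ - (x - y)⁻¹ + (a + b + y - x)⁻¹ - (b + y - x)⁻¹) x := by
    refine H.congr_deriv ?_
    ring
  exact H2.deriv

set_option maxHeartbeats 1000000 in
private lemma E01 (a b c ψ x y : ℝ) (hψ : 0 < ψ) (hx : 0 < x) (hy : 0 < y)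
    (hyx : y < x) (hxby : x - b < y) (ha : 0 < a) (hb : 0 < b) (hc : 0 < c)
    (hψx : 0 < ψ + x) (hxy : 0 < x - y) (hcxy : 0 < c + x - y)
    (hbyx : 0 < b + y - x) (habyx : 0 < a + b + y - x) :
    deriv (fun t => deriv (fun s => gFn a b c ψ s t) x) y =
      -(c + x - y)⁻¹ + (x - y)⁻¹ - (a + b + y - x)⁻¹ + (b + y - x)⁻¹ := by
  have hev : (fun t => deriv (fun s => gFn a b c ψ s t) x) =ᶠ[nhds y]
      (fun t => Real.log (ψ + x) - Real.log x + Real.log (c + x - t) - Real.log (x - t)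
        - Real.log (a + b + t - x) + Real.log (b + t - x)) := by
    filter_upwards [Ioo_mem_nhds hxby hyx] with t ht
    exact (hasDerivAt_gFn_x a b c ψ t x hψx hx (by linarith [ht.2]) (by linarith [ht.2])
      (by linarith [ht.1]) (by linarith [ht.1])).deriv
  rw [hev.deriv_eq]
  have M3 := logDeriv'' ((hasDerivAt_id y).const_sub (c + x)) hcxy.ne'
  have M4 := logDeriv'' ((hasDerivAt_id y).const_sub x) hxy.ne'
  have M5 := logDeriv'' (((hasDerivAt_id y).const_add (a + b)).sub_const x) habyx.ne'
  have M6 := logDeriv'' (((hasDerivAt_id y).const_add b).sub_const x) hbyx.ne'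
  have H := (((((hasDerivAt_const y (Real.log (ψ + x))).sub
    (hasDerivAt_const y (Real.log x))).add M3).sub M4).sub M5).add M6
  simp only [id_eq] at H
  have H2 : HasDerivAt (fun t => Real.log (ψ + x) - Real.log x + Real.log (c + x - t)
      - Real.log (x - t) - Real.log (a + b + t - x) + Real.log (b + t - x))
      (-(c + x - y)⁻¹ + (x - y)⁻¹ - (a + b + y - x)⁻¹ + (b + y - x)⁻¹) y := by
    refine H.congr_deriv ?_
    ring
  exact H2.deriv

set_option maxHeartbeats 1000000 in
private lemma E10 (a b c ψ x y : ℝ) (hψ : 0 < ψ) (hx : 0 < x) (hy : 0 < y)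
    (hyx : y < x) (hxby' : x < b + y) (hy1 : y < 1) (ha : 0 < a) (hb : 0 < b) (hc : 0 < c)
    (hxy : 0 < x - y) (hcxy : 0 < c + x - y)
    (hbyx : 0 < b + y - x) (habyx : 0 < a + b + y - x)
    (h2y : 0 < 2 - y) (h1y : 0 < 1 - y) (h1py : 0 < 1 + y) :
    deriv (fun t => deriv (fun s => gFn a b c ψ t s) y) x =
      -(c + x - y)⁻¹ + (x - y)⁻¹ - (a + b + y - x)⁻¹ + (b + y - x)⁻¹ := by
  have hev : (fun t => deriv (fun s => gFn a b c ψ t s) y) =ᶠ[nhds x]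
      (fun t => -Real.log (2 - y) + Real.log (1 - y) + Real.log (1 + y) - Real.log y
        - Real.log (c + t - y) + Real.log (t - y) + Real.log (a + b + y - t)
        - Real.log (b + y - t)) := by
    filter_upwards [Ioo_mem_nhds hyx hxby'] with t ht
    exact (hasDerivAt_gFn_y a b c ψ t y h2y h1y h1py hy (by linarith [ht.1])
      (by linarith [ht.1]) (by linarith [ht.2]) (by linarith [ht.2])).deriv
  rw [hev.deriv_eq]
  have P5 := logDeriv'' (((hasDerivAt_id x).const_add c).sub_const y) hcxy.ne'
  have P6 := logDeriv'' ((hasDerivAt_id x).sub_const y) hxy.ne'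
  have P7 := logDeriv'' ((hasDerivAt_id x).const_sub (a + b + y)) habyx.ne'
  have P8 := logDeriv'' ((hasDerivAt_id x).const_sub (b + y)) hbyx.ne'
  have H := (((((((hasDerivAt_const x (-Real.log (2 - y))).add
    (hasDerivAt_const x (Real.log (1 - y)))).add
    (hasDerivAt_const x (Real.log (1 + y)))).sub
    (hasDerivAt_const x (Real.log y))).sub P5).add P6).add P7).sub P8
  simp only [id_eq] at H
  have H2 : HasDerivAt (fun t => -Real.log (2 - y) + Real.log (1 - y) + Real.log (1 + y)
      - Real.log y - Real.log (c + t - y) + Real.log (t - y) + Real.log (a + b + y - t)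
      - Real.log (b + y - t))
      (-(c + x - y)⁻¹ + (x - y)⁻¹ - (a + b + y - x)⁻¹ + (b + y - x)⁻¹) x := by
    refine H.congr_deriv ?_
    ring
  exact H2.deriv

set_option maxHeartbeats 1000000 in
private lemma E11 (a b c ψ x y : ℝ) (hψ : 0 < ψ) (hx : 0 < x) (hy : 0 < y)
    (hyx : y < x) (hxby : x - b < y) (hy1 : y < 1) (ha : 0 < a) (hb : 0 < b) (hc : 0 < c)
    (hxy : 0 < x - y) (hcxy : 0 < c + x - y)
    (hbyx : 0 < b + y - x) (habyx : 0 < a + b + y - x)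
    (h2y : 0 < 2 - y) (h1y : 0 < 1 - y) (h1py : 0 < 1 + y) :
    deriv (fun t => deriv (fun s => gFn a b c ψ x s) t) y =
      (2 - y)⁻¹ - (1 - y)⁻¹ + (1 + y)⁻¹ - y⁻¹ + (c + x - y)⁻¹ - (x - y)⁻¹
        + (a + b + y - x)⁻¹ - (b + y - x)⁻¹ := by
  have hev : (fun t => deriv (fun s => gFn a b c ψ x s) t) =ᶠ[nhds y]
      (fun t => -Real.log (2 - t) + Real.log (1 - t) + Real.log (1 + t) - Real.log t
        - Real.log (c + x - t) + Real.log (x - t) + Real.log (a + b + t - x)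
        - Real.log (b + t - x)) := by
    filter_upwards [Ioo_mem_nhds (max_lt hxby hy) (lt_min hyx hy1)] with t ht
    have ht1a : x - b < t := lt_of_le_of_lt (le_max_left _ _) ht.1
    have ht1b : (0:ℝ) < t := lt_of_le_of_lt (le_max_right _ _) ht.1
    have ht2a : t < x := lt_of_lt_of_le ht.2 (min_le_left _ _)
    have ht2b : t < 1 := lt_of_lt_of_le ht.2 (min_le_right _ _)
    exact (hasDerivAt_gFn_y a b c ψ x t (by linarith) (by linarith) (by linarith) ht1b
      (by linarith) (by linarith) (by linarith) (by linarith)).deriv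
  rw [hev.deriv_eq]
  have R1 := logDeriv'' ((hasDerivAt_id y).const_sub 2) h2y.ne'
  have R2 := logDeriv'' ((hasDerivAt_id y).const_sub 1) h1y.ne'
  have R3 := logDeriv'' ((hasDerivAt_id y).const_add 1) h1py.ne'
  have R4 := Real.hasDerivAt_log hy.ne'
  have R5 := logDeriv'' ((hasDerivAt_id y).const_sub (c + x)) hcxy.ne'
  have R6 := logDeriv'' ((hasDerivAt_id y).const_sub x) hxy.ne'
  have R7 := logDeriv'' (((hasDerivAt_id y).const_add (a + b)).sub_const x) habyx.ne'
  have R8 := logDeriv'' (((hasDerivAt_id y).const_add b).sub_const x) hbyx.ne'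
  have H := ((((((R1.neg.add R2).add R3).sub R4).sub R5).add R6).add R7).sub R8
  simp only [id_eq] at H
  have H2 : HasDerivAt (fun t => -Real.log (2 - t) + Real.log (1 - t) + Real.log (1 + t)
      - Real.log t - Real.log (c + x - t) + Real.log (x - t) + Real.log (a + b + t - x)
      - Real.log (b + t - x))
      ((2 - y)⁻¹ - (1 - y)⁻¹ + (1 + y)⁻¹ - y⁻¹ + (c + x - y)⁻¹ - (x - y)⁻¹
        + (a + b + y - x)⁻¹ - (b + y - x)⁻¹) y := by
    refine H.congr_deriv ?_
    ring
  exact H2.deriv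

set_option maxHeartbeats 1000000 in
/-- Both eigenvalues of the Hessian of `f + h` at every point of `𝒟` are at most
`−ψ/(2(ψ+2))`. -/
theorem hessian_eigenvalues_bound (a b c ψ : ℝ) (ha : 0 < a) (hb : 0 < b) (hc : 0 < c)
    (habc : a + b + c = 1) (hψ : 0 < ψ) :
    ∀ x y : ℝ, memD b x y → ∀ μ : ℝ, ∀ v : Fin 2 → ℝ, v ≠ 0 →
      (hessG a b c ψ x y).mulVec v = μ • v → μ ≤ -ψ / (2 * (ψ + 2)) := by
  rintro x y ⟨hx, hy, hxb, hxby, hyx, hy1⟩ μ v hv hmul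
  have hb1 : b < 1 := by linarith
  have hx2 : x < 2 := by linarith
  have hψx : 0 < ψ + x := by linarith
  have hxy : 0 < x - y := by linarith
  have hcxy : 0 < c + x - y := by linarith
  have hbyx : 0 < b + y - x := by linarith
  have habyx : 0 < a + b + y - x := by linarith
  have h2y : 0 < 2 - y := by linarith
  have h1y : 0 < 1 - y := by linarith
  have h1py : 0 < 1 + y := by linarith
  have hxby' : x < b + y := by linarith
  have hH : hessG a b c ψ x y =
      !![(ψ + x)⁻¹ - x⁻¹ + (c + x - y)⁻¹ - (x - y)⁻¹ + (a + b + y - x)⁻¹ - (b + y - x)⁻¹,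
         -(c + x - y)⁻¹ + (x - y)⁻¹ - (a + b + y - x)⁻¹ + (b + y - x)⁻¹;
         -(c + x - y)⁻¹ + (x - y)⁻¹ - (a + b + y - x)⁻¹ + (b + y - x)⁻¹,
         (2 - y)⁻¹ - (1 - y)⁻¹ + (1 + y)⁻¹ - y⁻¹ + (c + x - y)⁻¹ - (x - y)⁻¹
           + (a + b + y - x)⁻¹ - (b + y - x)⁻¹] := by
    rw [hessG, E00 a b c ψ x y hψ hx hy hyx hxby' ha hb hc hψx hxy hcxy hbyx habyx,
      E01 a b c ψ x y hψ hx hy hyx hxby ha hb hc hψx hxy hcxy hbyx habyx,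
      E10 a b c ψ x y hψ hx hy hyx hxby' hy1 ha hb hc hxy hcxy hbyx habyx h2y h1y h1py,
      E11 a b c ψ x y hψ hx hy hyx hxby hy1 ha hb hc hxy hcxy hbyx habyx h2y h1y h1py]
  obtain ⟨A, hAdef⟩ : ∃ A : ℝ, A = (ψ + x)⁻¹ - x⁻¹ + (c + x - y)⁻¹ - (x - y)⁻¹
      + (a + b + y - x)⁻¹ - (b + y - x)⁻¹ := ⟨_, rfl⟩
  obtain ⟨B, hBdef⟩ : ∃ B : ℝ, B = -(c + x - y)⁻¹ + (x - y)⁻¹ - (a + b + y - x)⁻¹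
      + (b + y - x)⁻¹ := ⟨_, rfl⟩
  obtain ⟨C, hCdef⟩ : ∃ C : ℝ, C = (2 - y)⁻¹ - (1 - y)⁻¹ + (1 + y)⁻¹ - y⁻¹ + (c + x - y)⁻¹
      - (x - y)⁻¹ + (a + b + y - x)⁻¹ - (b + y - x)⁻¹ := ⟨_, rfl⟩
  rw [← hAdef, ← hBdef, ← hCdef] at hH
  rw [hH] at hmul
  have h0 := congrFun hmul 0
  have h1 := congrFun hmul 1
  simp only [Matrix.mulVec, dotProduct, Fin.sum_univ_two, Matrix.cons_val',
    Matrix.cons_val_zero, Matrix.cons_val_one, Matrix.head_cons, Matrix.empty_val',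
    Matrix.cons_val_fin_one, Matrix.head_fin_const, Matrix.of_apply, Pi.smul_apply,
    smul_eq_mul] at h0 h1
  have hv01 : v 0 ≠ 0 ∨ v 1 ≠ 0 := by
    by_contra hcon
    push_neg at hcon
    exact hv (funext fun i => by fin_cases i <;> simp [hcon.1, hcon.2])
  have hvv : 0 < v 0 ^ 2 + v 1 ^ 2 := by
    rcases hv01 with h | h
    · have := pow_pos (abs_pos.mpr h) 2
      nlinarith [sq_abs (v 0), sq_nonneg (v 1)]
    · have := pow_pos (abs_pos.mpr h) 2
      nlinarith [sq_abs (v 1), sq_nonneg (v 0)]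
  have hk : (0:ℝ) < 2 * (ψ + 2) := by linarith
  have eP : A + B = -(ψ / (x * (ψ + x))) := by
    rw [hAdef, hBdef]
    field_simp
    ring
  have hPk : A + B ≤ -(ψ / (2 * (ψ + 2))) := by
    have h2x : (0:ℝ) < 2 - x := by linarith
    have h2px : (0:ℝ) < 2 + x := by linarith
    rw [eP, neg_le_neg_iff, div_le_div_iff₀ hk (by positivity)]
    nlinarith [mul_nonneg (mul_nonneg h2x.le hψ.le) hψ.le, mul_pos (mul_pos h2x h2px) hψ]
  have e1 : (1 - y)⁻¹ - (2 - y)⁻¹ = ((1 - y) * (2 - y))⁻¹ := by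
    field_simp
    try ring
  have e2 : y⁻¹ - (1 + y)⁻¹ = (y * (1 + y))⁻¹ := by
    field_simp
    try ring
  have b1 : (1:ℝ) / 2 ≤ ((1 - y) * (2 - y))⁻¹ := by
    rw [← one_div]
    exact one_div_le_one_div_of_le (by positivity) (by nlinarith)
  have b2 : (1:ℝ) / 2 ≤ (y * (1 + y))⁻¹ := by
    rw [← one_div]
    exact one_div_le_one_div_of_le (by positivity) (by nlinarith)
  have hk2 : ψ / (2 * (ψ + 2)) ≤ 1 / 2 := by
    rw [div_le_div_iff₀ hk (by norm_num)]
    linarith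
  have hQk : C + B ≤ -(ψ / (2 * (ψ + 2))) := by
    have hCB : C + B = (2 - y)⁻¹ - (1 - y)⁻¹ + (1 + y)⁻¹ - y⁻¹ := by
      rw [hCdef, hBdef]; ring
    rw [hCB]
    linarith
  have i1 : (c + x - y)⁻¹ < (x - y)⁻¹ := by
    apply inv_strictAnti₀ hxy
    linarith
  have i2 : (a + b + y - x)⁻¹ < (b + y - x)⁻¹ := by
    apply inv_strictAnti₀ hbyx
    linarith
  have hBpos : 0 < B := by
    rw [hBdef]; linarith
  have key : A * v 0 ^ 2 + 2 * B * v 0 * v 1 + C * v 1 ^ 2 = μ * (v 0 ^ 2 + v 1 ^ 2) := by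
    linear_combination v 0 * h0 + v 1 * h1
  have ident : (μ + ψ / (2 * (ψ + 2))) * (v 0 ^ 2 + v 1 ^ 2) =
      (A + B + ψ / (2 * (ψ + 2))) * v 0 ^ 2 + (C + B + ψ / (2 * (ψ + 2))) * v 1 ^ 2
        - B * (v 0 - v 1) ^ 2 := by
    linear_combination -key
  have t1 : (A + B + ψ / (2 * (ψ + 2))) * v 0 ^ 2 ≤ 0 :=
    mul_nonpos_of_nonpos_of_nonneg (by linarith) (sq_nonneg _)
  have t2 : (C + B + ψ / (2 * (ψ + 2))) * v 1 ^ 2 ≤ 0 :=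
    mul_nonpos_of_nonpos_of_nonneg (by linarith) (sq_nonneg _)
  have t3 : 0 ≤ B * (v 0 - v 1) ^ 2 := mul_nonneg hBpos.le (sq_nonneg _)
  have hfin : (μ + ψ / (2 * (ψ + 2))) * (v 0 ^ 2 + v 1 ^ 2) ≤ 0 := by
    rw [ident]; linarith
  have hmu : μ + ψ / (2 * (ψ + 2)) ≤ 0 := by
    by_contra hcon
    push_neg at hcon
    have hpos := mul_pos hcon hvv
    linarith [hfin, hpos]
  rw [neg_div]
  linarith
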